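/- arXiv:1209.6543 — 3 statements merged into one kernel-verified Lean document; each statement's English description precedes it below -/
import Mathlib

section
/- With Q an n×n Hermitian positive definite complex matrix, Q̃ its real isomorph, and A_h = I₂ ⊗ e_h e_hᵀ, the matrix B_h = (Q̃^{-1/2} A_h Q̃^{-1/2}) / Re[Q⁻¹]_{hh} is idempotent: B_h² = B_h, provided Re[Q⁻¹]_{hh} ≠ 0. -/
open Matrix ComplexOrder

/-- The real isomorph of a complex matrix `Q`:
the block matrix `[[Re Q, -Im Q], [Im Q, Re Q]]`. -/
noncomputable def realIsomorph {n : ℕ} (Q : Matrix (Fin n) (Fin n) ℂ) :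
    Matrix (Fin n ⊕ Fin n) (Fin n ⊕ Fin n) ℝ :=
  Matrix.fromBlocks (Q.map Complex.re) (-(Q.map Complex.im))
    (Q.map Complex.im) (Q.map Complex.re)

/-- `A_h = I₂ ⊗ e_h e_hᵀ`. -/
noncomputable def Amat {n : ℕ} (h : Fin n) :
    Matrix (Fin n ⊕ Fin n) (Fin n ⊕ Fin n) ℝ :=
  Matrix.fromBlocks (Matrix.single h h 1) 0 0 (Matrix.single h h 1)

lemma realIsomorph_mul {n : ℕ} (M N : Matrix (Fin n) (Fin n) ℂ) :
    realIsomorph (M * N) = realIsomorph M * realIsomorph N := by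
  ext i j
  rcases i with i | i <;> rcases j with j | j <;>
    simp [realIsomorph, Matrix.fromBlocks, Matrix.mul_apply, Complex.mul_re,
      Complex.mul_im, Finset.sum_add_distrib, Finset.sum_sub_distrib, sub_eq_add_neg,
      ← Finset.sum_neg_distrib] <;> ring_nf

lemma realIsomorph_one {n : ℕ} : realIsomorph (1 : Matrix (Fin n) (Fin n) ℂ) = 1 := by
  ext i j
  rcases i with i | i <;> rcases j with j | j <;>
    simp [realIsomorph, Matrix.fromBlocks, Matrix.one_apply, Matrix.map_apply,
      apply_ite Complex.re, apply_ite Complex.im]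

lemma stdE_mul {n : ℕ} (h : Fin n) (X : Matrix (Fin n) (Fin n) ℝ) :
    Matrix.single h h 1 * X * Matrix.single h h 1
      = X h h • Matrix.single h h 1 := by
  ext i j
  simp [Matrix.mul_apply, Matrix.single, ite_and, Finset.sum_ite_eq,
    Finset.sum_ite_eq', mul_comm]
  aesop

/-- If `S = Q̃^{-1/2}` is the positive definite square root of `Q̃⁻¹` and
`Re[Q⁻¹]_{hh} ≠ 0`, then `B_h = (S A_h S) / Re[Q⁻¹]_{hh}` is idempotent. -/
theorem Bmat_idempotent {n : ℕ} (Q : Matrix (Fin n) (Fin n) ℂ) (hQ : Q.PosDef)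
    (h : Fin n) (S : Matrix (Fin n ⊕ Fin n) (Fin n ⊕ Fin n) ℝ)
    (hS : S.PosDef) (hSsq : S * S = (realIsomorph Q)⁻¹)
    (hne : (Q⁻¹ h h).re ≠ 0) :
    (((Q⁻¹ h h).re)⁻¹ • (S * Amat h * S)) * (((Q⁻¹ h h).re)⁻¹ • (S * Amat h * S))
      = ((Q⁻¹ h h).re)⁻¹ • (S * Amat h * S) := by
  set c := (Q⁻¹ h h).re with hc
  have hQdet : IsUnit Q.det := hQ.det_pos.ne'.isUnit
  have hinv : (realIsomorph Q)⁻¹ = realIsomorph Q⁻¹ := by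
    apply Matrix.inv_eq_right_inv
    rw [← realIsomorph_mul, Matrix.mul_nonsing_inv _ hQdet, realIsomorph_one]
  have him : (Q⁻¹ h h).im = 0 := by
    have hH : (Q⁻¹).IsHermitian := hQ.1.inv
    have h2 := congrArg Complex.im (hH.apply h h)
    simp only [Complex.star_def, Complex.conj_im] at h2
    linarith
  have key : Amat h * (realIsomorph Q)⁻¹ * Amat h = c • Amat h := by
    rw [hinv]
    have hre := stdE_mul h (Q⁻¹.map Complex.re)
    have him' := stdE_mul h (Q⁻¹.map Complex.im)
    have h0 : (Q⁻¹.map Complex.im) h h = 0 := by simp [Matrix.map_apply, him]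
    rw [h0, zero_smul] at him'
    have hr : (Q⁻¹.map Complex.re) h h = c := by simp [Matrix.map_apply, hc]
    rw [hr] at hre
    simp [Amat, realIsomorph, Matrix.fromBlocks_multiply, Matrix.fromBlocks_smul,
      Matrix.mul_assoc, hre, him']
  calc (c⁻¹ • (S * Amat h * S)) * (c⁻¹ • (S * Amat h * S))
      = (c⁻¹ * c⁻¹) • (S * (Amat h * (S * S) * Amat h) * S) := by
        rw [smul_mul_smul_comm]
        ring_nf
        noncomm_ring
    _ = (c⁻¹ * c⁻¹) • (S * (c • Amat h) * S) := by rw [hSsq, key]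
    _ = c⁻¹ • (S * Amat h * S) := by
        rw [Matrix.mul_smul, Matrix.smul_mul, smul_smul]
        congr 1
        field_simp
end

section
/- Let ζ₁,…,ζ_p ∈ ℂ be pairwise distinct and γ₁,…,γ_p ∈ ℂ nonzero, and set s_k = Σ_{j=1}^p γ_j ζ_j^k for k = 0,…,2p-1. Let U₀ = (s_{i+j})_{0≤i,j≤p-1} and U₁ = (s_{i+j+1})_{0≤i,j≤p-1} be the two p×p Hankel matrices. Then det(U₁ - z U₀) = 0 if and only if z ∈ {ζ₁,…,ζ_p}; i.e. the ζ_j are exactly the generalized eigenvalues of the pencil (U₁, U₀). -/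
open Matrix

/-- For `s_k = Σ_j γ_j ζ_j^k` with pairwise distinct `ζ_j` and nonzero `γ_j`,
the `ζ_j` are exactly the generalized eigenvalues of the Hankel pencil
`(U₁, U₀)`: `det(U₁ - z U₀) = 0 ↔ z ∈ {ζ₁,…,ζ_p}`. -/
theorem hankel_pencil_generalized_eigenvalues {p : ℕ}
    (ζ γ : Fin p → ℂ) (hζ : Function.Injective ζ) (hγ : ∀ j, γ j ≠ 0)
    (s : ℕ → ℂ) (hs : ∀ k, s k = ∑ j, γ j * ζ j ^ k)
    (U₀ U₁ : Matrix (Fin p) (Fin p) ℂ)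
    (hU₀ : ∀ i j, U₀ i j = s ((i : ℕ) + j))
    (hU₁ : ∀ i j, U₁ i j = s ((i : ℕ) + j + 1)) :
    ∀ z : ℂ, (U₁ - z • U₀).det = 0 ↔ ∃ j, z = ζ j := by
  intro z
  set M := Matrix.vandermonde ζ with hM
  set d : Fin p → ℂ := fun j => γ j * (ζ j - z) with hd
  have hfact : U₁ - z • U₀ = Mᵀ * (Matrix.diagonal d * M) := by
    ext i k
    rw [Matrix.mul_apply]
    simp only [Matrix.sub_apply, Matrix.smul_apply, hU₀, hU₁, hs, hM, hd,
      Matrix.diagonal_mul, Matrix.transpose_apply, Matrix.vandermonde_apply,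
      smul_eq_mul, Finset.mul_sum]
    rw [← Finset.sum_sub_distrib]
    apply Finset.sum_congr rfl
    intro j _
    ring
  have hdetM : M.det ≠ 0 := (Matrix.det_vandermonde_ne_zero_iff).2 hζ
  rw [hfact, Matrix.det_mul, Matrix.det_mul, Matrix.det_transpose,
    Matrix.det_diagonal]
  constructor
  · intro h
    have : ∏ j, d j = 0 := by
      rcases mul_eq_zero.1 h with h1 | h1
      · exact absurd h1 hdetM
      · rcases mul_eq_zero.1 h1 with h2 | h2
        · exact h2
        · exact absurd h2 hdetM
    obtain ⟨j, _, hj⟩ := Finset.prod_eq_zero_iff.1 this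
    rcases mul_eq_zero.1 hj with h2 | h2
    · exact absurd h2 (hγ j)
    · exact ⟨j, by linear_combination -h2⟩
  · rintro ⟨j, rfl⟩
    have : ∏ j', d j' = 0 :=
      Finset.prod_eq_zero (Finset.mem_univ j) (by simp [hd])
    rw [this]; ring
end

section
/- Let n = 2p, and consider the map T⁻¹: (ζ₁,…,ζ_p, γ₁,…,γ_p) ↦ (a₀,…,a_{n-1}) with a_k = Σ_{j=1}^p γ_j ζ_j^k. Its complex Jacobian determinant equals (−1)^p ∏_{j=1}^p γ_j · ∏_{j<h}(ζ_j − ζ_h)⁴ (up to sign convention), and in particular it is nonzero whenever the ζ_j are pairwise distinct and all γ_j ≠ 0. -/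
open Matrix Finset

/-- The complex Jacobian matrix of the map
`T⁻¹ : (ζ₁,…,ζ_p,γ₁,…,γ_p) ↦ (a₀,…,a_{2p-1})`, `a_k = Σ_j γ_j ζ_j^k`:
rows are indexed by `k = 0,…,2p-1` (via `finSumFinEquiv`), columns by the
variables, with entries `∂a_k/∂ζ_j = γ_j k ζ_j^{k-1}` and `∂a_k/∂γ_j = ζ_j^k`. -/
noncomputable def jacobianT {p : ℕ} (ζ γ : Fin p → ℂ) :
    Matrix (Fin p ⊕ Fin p) (Fin p ⊕ Fin p) ℂ :=
  fun i j =>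
    Sum.elim
      (fun jz => γ jz * ((finSumFinEquiv i : ℕ) : ℂ) * ζ jz ^ ((finSumFinEquiv i : ℕ) - 1))
      (fun jg => ζ jg ^ (finSumFinEquiv i : ℕ)) j

section Aux
open Polynomial

noncomputable def qp (z : ℂ) (k : ℕ) : Polynomial ℂ :=
  ∑ i ∈ Finset.range k, (C z + X) ^ i * (C z) ^ (k - 1 - i)

lemma qp_mul_X (z : ℂ) (k : ℕ) :
    qp z k * X = (C z + X) ^ k - (C z) ^ k := by
  have h := geom_sum₂_mul (C z + X) (C z) k
  simpa [qp] using h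

lemma qp_eval_zero (z : ℂ) (k : ℕ) :
    (qp z k).eval 0 = (k : ℂ) * z ^ (k - 1) := by
  have h : ∀ i ∈ Finset.range k, z ^ i * z ^ (k - 1 - i) = z ^ (k - 1) := by
    intro i hi
    rw [← pow_add]
    congr 1
    have := Finset.mem_range.mp hi
    omega
  simp only [qp, eval_finset_sum, eval_mul, eval_pow, eval_add, eval_C, eval_X, add_zero]
  rw [Finset.sum_congr rfl h, Finset.sum_const, Finset.card_range, nsmul_eq_mul]

noncomputable def Nmat {p : ℕ} (ζ : Fin p → ℂ) :
    Matrix (Fin p ⊕ Fin p) (Fin p ⊕ Fin p) (Polynomial ℂ) :=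
  fun i j =>
    Sum.elim
      (fun a => qp (ζ a) (finSumFinEquiv i : ℕ))
      (fun a => (C (ζ a)) ^ (finSumFinEquiv i : ℕ)) j

lemma prod_Ioi_eq_prod_ite {n : ℕ} {M : Type*} [CommMonoid M] (F : Fin n → M) (i : Fin n) :
    ∏ j ∈ Ioi i, F j = ∏ j, if i < j then F j else 1 := by
  rw [← Finset.prod_filter]; congr 1; ext j; simp

lemma Nmat_det {p : ℕ} (ζ : Fin p → ℂ) :
    (Nmat ζ).det =
      (-1 : Polynomial ℂ) ^ p *
        ((∏ a, ∏ b ∈ Ioi a, (C (ζ b) - C (ζ a))) *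
          (∏ a, ∏ b ∈ Ioi a, (C (ζ b) - C (ζ a))) *
          ∏ a, ∏ b ∈ Finset.univ.erase a, (C (ζ b) - (C (ζ a) + X))) := by
  classical
  set e : Fin p ⊕ Fin p ≃ Fin (p + p) := finSumFinEquiv with he
  set ν : Fin p ⊕ Fin p → Polynomial ℂ :=
    Sum.elim (fun a => C (ζ a) + X) (fun a => C (ζ a)) with hν
  set v : Fin (p + p) → Polynomial ℂ := fun i => ν (e.symm i) with hv
  set B : Matrix (Fin p ⊕ Fin p) (Fin p ⊕ Fin p) (Polynomial ℂ) :=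
    Matrix.fromBlocks ((X : Polynomial ℂ) • (1 : Matrix (Fin p) (Fin p) (Polynomial ℂ))) 0 1 1 with hB
  have hdetB : B.det = X ^ p := by
    rw [hB, Matrix.det_fromBlocks_zero₁₂, Matrix.det_one, mul_one, Matrix.det_smul,
      Matrix.det_one, mul_one, Fintype.card_fin]
  have hMB : ((vandermonde v)ᵀ).submatrix e e = Nmat ζ * B := by
    ext i j : 1
    rw [Matrix.mul_apply, Fintype.sum_sum_type]
    cases j with
    | inl j =>
        simp only [Matrix.submatrix_apply, Matrix.transpose_apply, vandermonde_apply, hv,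
          Equiv.symm_apply_apply, hB, Matrix.fromBlocks_apply₁₁, Matrix.fromBlocks_apply₂₁,
          Matrix.smul_apply, Matrix.one_apply, smul_eq_mul, mul_ite, mul_one, mul_zero,
          Finset.sum_ite_eq', Finset.mem_univ, if_true, hν]
        simp only [Nmat, Sum.elim_inl, Sum.elim_inr, qp_mul_X]
        ring
    | inr j =>
        simp only [Matrix.submatrix_apply, Matrix.transpose_apply, vandermonde_apply, hv,
          Equiv.symm_apply_apply, hB, Matrix.fromBlocks_apply₁₂, Matrix.fromBlocks_apply₂₂,
          Matrix.one_apply, mul_ite, mul_one, mul_zero, Finset.sum_ite_eq', Finset.mem_univ,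
          if_true, Finset.sum_const_zero, zero_add, hν]
        simp [Nmat]
        rw [he]
  have h1 : (vandermonde v).det = (Nmat ζ).det * X ^ p := by
    rw [← Matrix.det_transpose (vandermonde v), ← Matrix.det_submatrix_equiv_self e, hMB,
      Matrix.det_mul, hdetB]
  -- now compute the Vandermonde determinant as a product and split
  have hll : ∀ a b : Fin p, ((e (Sum.inl a) : Fin (p + p)) < e (Sum.inl b)) ↔ a < b := by
    intro a b
    simp only [he, finSumFinEquiv_apply_left, Fin.lt_def, Fin.coe_castAdd]
  have hlr : ∀ a b : Fin p, (e (Sum.inl a) : Fin (p + p)) < e (Sum.inr b) := by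
    intro a b
    simp only [he, finSumFinEquiv_apply_left, finSumFinEquiv_apply_right, Fin.lt_def,
      Fin.coe_castAdd, Fin.coe_natAdd]
    omega
  have hrl : ∀ a b : Fin p, ¬ ((e (Sum.inr a) : Fin (p + p)) < e (Sum.inl b)) := by
    intro a b
    simp only [he, finSumFinEquiv_apply_left, finSumFinEquiv_apply_right, Fin.lt_def,
      Fin.coe_castAdd, Fin.coe_natAdd]
    omega
  have hrr : ∀ a b : Fin p, ((e (Sum.inr a) : Fin (p + p)) < e (Sum.inr b)) ↔ a < b := by
    intro a b
    simp only [he, finSumFinEquiv_apply_right, Fin.lt_def, Fin.coe_natAdd]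
    omega
  have h2 : (vandermonde v).det =
      ∏ s, ∏ t, (if (e s : Fin (p + p)) < e t then ν t - ν s else 1) := by
    rw [det_vandermonde]
    rw [← Equiv.prod_comp e (fun i => ∏ j ∈ Ioi i, (v j - v i))]
    refine Finset.prod_congr rfl fun s _ => ?_
    rw [prod_Ioi_eq_prod_ite (fun j => v j - v (e s)) (e s)]
    rw [← Equiv.prod_comp e (fun j => if (e s : Fin (p + p)) < j then v j - v (e s) else 1)]
    refine Finset.prod_congr rfl fun t _ => ?_
    simp [hv, Equiv.symm_apply_apply]
  have h3 : (vandermonde v).det =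
      (∏ a, ∏ b ∈ Ioi a, (C (ζ b) - C (ζ a))) *
        ((-X : Polynomial ℂ) ^ p *
          ∏ a, ∏ b ∈ Finset.univ.erase a, (C (ζ b) - (C (ζ a) + X))) *
        (∏ a, ∏ b ∈ Ioi a, (C (ζ b) - C (ζ a))) := by
    rw [h2, Fintype.prod_sum_type]
    congr 1
    · -- outer over inl : product of (inl,inl) and (inl,inr) blocks
      have : ∀ a : Fin p,
          (∏ t, (if (e (Sum.inl a) : Fin (p + p)) < e t then ν t - ν (Sum.inl a) else 1)) =
          (∏ b, (if a < b then C (ζ b) - C (ζ a) else 1)) *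
            ∏ b, (C (ζ b) - (C (ζ a) + X)) := by
        intro a
        rw [Fintype.prod_sum_type]
        congr 1
        · refine Finset.prod_congr rfl fun b _ => ?_
          by_cases hab : a < b
          · rw [if_pos ((hll a b).mpr hab), if_pos hab]
            simp only [hν, Sum.elim_inl]
            ring
          · rw [if_neg (fun h => hab ((hll a b).mp h)), if_neg hab]
        · refine Finset.prod_congr rfl fun b _ => ?_
          rw [if_pos (hlr a b)]
          simp [hν]
      rw [Finset.prod_congr rfl fun a _ => this a, Finset.prod_mul_distrib]
      congr 1
      · exact Finset.prod_congr rfl fun a _ =>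
          (prod_Ioi_eq_prod_ite (fun b => C (ζ b) - C (ζ a)) a).symm
      · -- peel off the diagonal
        have hp : ∀ a : Fin p, (∏ b, (C (ζ b) - (C (ζ a) + X))) =
            (-X) * ∏ b ∈ Finset.univ.erase a, (C (ζ b) - (C (ζ a) + X)) := by
          intro a
          rw [← Finset.mul_prod_erase univ _ (Finset.mem_univ a)]
          congr 1
          ring
        rw [Finset.prod_congr rfl fun a _ => hp a, Finset.prod_mul_distrib,
          Finset.prod_const, Finset.card_univ, Fintype.card_fin]
    · -- outer over inr : (inr,inl) block is trivial, (inr,inr) is the second T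
      have : ∀ a : Fin p,
          (∏ t, (if (e (Sum.inr a) : Fin (p + p)) < e t then ν t - ν (Sum.inr a) else 1)) =
          ∏ b, (if a < b then C (ζ b) - C (ζ a) else 1) := by
        intro a
        rw [Fintype.prod_sum_type]
        have : (∏ b, (if (e (Sum.inr a) : Fin (p + p)) < e (Sum.inl b)
            then ν (Sum.inl b) - ν (Sum.inr a) else 1)) = 1 := by
          apply Finset.prod_eq_one
          intro b _
          rw [if_neg (hrl a b)]
        rw [this, one_mul]
        refine Finset.prod_congr rfl fun b _ => ?_
        by_cases hab : a < b
        · rw [if_pos ((hrr a b).mpr hab), if_pos hab]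
          simp [hν]
        · rw [if_neg (fun h => hab ((hrr a b).mp h)), if_neg hab]
      rw [Finset.prod_congr rfl fun a _ => this a]
      exact Finset.prod_congr rfl fun a _ =>
        (prod_Ioi_eq_prod_ite (fun b => C (ζ b) - C (ζ a)) a).symm
  have hX : (X : Polynomial ℂ) ^ p ≠ 0 := pow_ne_zero _ X_ne_zero
  apply mul_right_cancel₀ hX
  rw [← h1, h3]
  ring

/-- The complex Jacobian determinant of `T⁻¹` equals, up to sign convention,
`(−1)^p ∏_j γ_j ∏_{j<h} (ζ_j − ζ_h)⁴`; in particular it is nonzero when the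
`ζ_j` are pairwise distinct and all `γ_j ≠ 0`. -/
theorem jacobianT_det {p : ℕ} (ζ γ : Fin p → ℂ)
    (hζ : Function.Injective ζ) (hγ : ∀ j, γ j ≠ 0) :
    ((jacobianT ζ γ).det =
        (-1) ^ p * (∏ j, γ j) * ∏ j, ∏ h ∈ Finset.Ioi j, (ζ j - ζ h) ^ 4 ∨
      (jacobianT ζ γ).det =
        -((-1) ^ p * (∏ j, γ j) * ∏ j, ∏ h ∈ Finset.Ioi j, (ζ j - ζ h) ^ 4)) ∧
    (jacobianT ζ γ).det ≠ 0 := by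
  classical
  set W : ℂ := ∏ j, ∏ h ∈ Finset.Ioi j, (ζ j - ζ h) ^ 4 with hW
  set E : ℂ := (-1) ^ p * (∏ j, γ j) * W with hE
  -- Step 1: relate jacobianT to the evaluated polynomial matrix
  have hJ : jacobianT ζ γ =
      ((Nmat ζ).map (Polynomial.evalRingHom (0 : ℂ))) *
        Matrix.diagonal (Sum.elim γ (fun _ => (1 : ℂ))) := by
    ext i j
    cases j with
    | inl j =>
        simp only [jacobianT, Sum.elim_inl, Matrix.mul_diagonal, Matrix.map_apply, Nmat,
          coe_evalRingHom, qp_eval_zero]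
        ring
    | inr j =>
        simp [jacobianT, Nmat, Matrix.mul_diagonal]
  have hdet1 : (jacobianT ζ γ).det =
      Polynomial.eval 0 ((Nmat ζ).det) * ∏ j, γ j := by
    rw [hJ, Matrix.det_mul, Matrix.det_diagonal,
      show ((Nmat ζ).map ⇑(Polynomial.evalRingHom (0:ℂ)))
        = (Polynomial.evalRingHom (0:ℂ)).mapMatrix (Nmat ζ) from rfl, ← RingHom.map_det]
    simp [Fintype.prod_sum_type]
  -- Step 2: evaluate the polynomial determinant
  have hdet0 : Polynomial.eval 0 ((Nmat ζ).det) =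
      (-1 : ℂ) ^ p *
        ((∏ a, ∏ b ∈ Ioi a, (ζ b - ζ a)) * (∏ a, ∏ b ∈ Ioi a, (ζ b - ζ a)) *
          ∏ a, ∏ b ∈ Finset.univ.erase a, (ζ b - ζ a)) := by
    rw [Nmat_det]
    simp [Polynomial.eval_prod]
  -- Step 3: off-diagonal product identity
  have hS : (∏ a, ∏ b ∈ Finset.univ.erase a, (ζ b - ζ a)) =
      ∏ i, ∏ j ∈ Ioi i, ((ζ j - ζ i) * (ζ i - ζ j)) := by
    have h := Finset.prod_prod_Ioi_mul_eq_prod_prod_off_diag (fun j i => ζ j - ζ i)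
    have h2 : (∏ a, ∏ b ∈ Finset.univ.erase a, (ζ b - ζ a)) =
        ∏ i, ∏ j ∈ ({i} : Finset (Fin p))ᶜ, (ζ j - ζ i) := by
      refine Finset.prod_congr rfl fun a _ => Finset.prod_congr ?_ fun _ _ => rfl
      rw [Finset.compl_singleton]
    rw [h2]
    convert h.symm using 3
  -- Step 4: combine products
  set m : ℕ := ∑ i : Fin p, (Ioi i).card with hm
  have hcomb : (∏ a, ∏ b ∈ Ioi a, (ζ b - ζ a)) * (∏ a, ∏ b ∈ Ioi a, (ζ b - ζ a)) *
      (∏ a, ∏ b ∈ Finset.univ.erase a, (ζ b - ζ a)) = (-1 : ℂ) ^ m * W := by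
    rw [hS, ← Finset.prod_mul_distrib, ← Finset.prod_mul_distrib]
    have : ∀ a : Fin p,
        (∏ b ∈ Ioi a, (ζ b - ζ a)) * (∏ b ∈ Ioi a, (ζ b - ζ a)) *
          ∏ b ∈ Ioi a, ((ζ b - ζ a) * (ζ a - ζ b)) =
        (-1 : ℂ) ^ (Ioi a).card * ∏ b ∈ Ioi a, (ζ a - ζ b) ^ 4 := by
      intro a
      rw [← Finset.prod_mul_distrib, ← Finset.prod_mul_distrib, ← Finset.prod_const,
        ← Finset.prod_mul_distrib]
      refine Finset.prod_congr rfl fun b _ => ?_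
      ring
    rw [Finset.prod_congr rfl fun a _ => this a, Finset.prod_mul_distrib,
      Finset.prod_pow_eq_pow_sum, ← hm, hW]
  have hdet : (jacobianT ζ γ).det = (-1 : ℂ) ^ m * E := by
    rw [hdet1, hdet0, hcomb, hE]
    ring
  have hEne : E ≠ 0 := by
    have hWne : W ≠ 0 := by
      rw [hW]
      refine Finset.prod_ne_zero_iff.mpr fun i _ => ?_
      refine Finset.prod_ne_zero_iff.mpr fun j hj => ?_
      refine pow_ne_zero _ (sub_ne_zero.mpr fun hij => ?_)
      exact absurd (hζ hij) (ne_of_lt (Finset.mem_Ioi.mp hj))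
    exact mul_ne_zero (mul_ne_zero (pow_ne_zero _ (by norm_num))
      (Finset.prod_ne_zero_iff.mpr fun j _ => hγ j)) hWne
  constructor
  · rcases Nat.even_or_odd m with hpar | hpar
    · left
      rw [hdet, hpar.neg_one_pow, one_mul]
    · right
      rw [hdet, hpar.neg_one_pow]
      ring
  · rw [hdet]
    exact mul_ne_zero (pow_ne_zero _ (by norm_num)) hEne

end Aux
end
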